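/- Let L be a lattice with a ℤ-action as above and X the quotient graph on L/ℤ. Then X satisfies the quadrangle condition: for every n ≥ 2 and vertices x, y, z, t ∈ X with d(x,y) = d(x,z) = n, d(y,t) = d(z,t) = 1 and d(x,t) = n + 1, there exists a vertex u ∈ X with d(x,u) = n - 1 and d(u,y) = d(u,z) = 1. -/

import Mathlib

open SimpleGraph

/-- The orbit relation of the `ℤ`-action on `L` generated by the order
automorphism `T` (the action of `n` is `T ^ n`, written `x + n` in the paper). -/
def zOrbitRel {L : Type*} [Lattice L] (T : L ≃o L) (x y : L) : Prop :=
  ∃ k : ℤ, (T ^ k) x = y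

/-- The graph `X` on the quotient `L/ℤ`, with an edge between two distinct classes `x, y`
whenever some representatives satisfy `x₀ ≤ y₀ ≤ x₀ + 1`. -/
def quotGraph {L : Type*} [Lattice L] (T : L ≃o L) : SimpleGraph (Quot (zOrbitRel T)) where
  Adj x y := x ≠ y ∧ ∃ x₀ y₀ : L, Quot.mk _ x₀ = x ∧ Quot.mk _ y₀ = y ∧
    x₀ ≤ y₀ ∧ y₀ ≤ T x₀
  symm := by
    constructor
    rintro x y ⟨hne, x₀, y₀, hx, hy, h1, h2⟩
    refine ⟨hne.symm, y₀, T x₀, hy, ?_, h2, T.monotone h1⟩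
    rw [← hx]
    exact (Quot.sound ⟨(1 : ℤ), by simp⟩).symm
  loopless := by constructor; rintro x ⟨hne, -⟩; exact hne rfl


section
variable {L : Type*} [Lattice L] (T : L ≃o L)

lemma zpow_apply_zpow (j k : ℤ) (x : L) : (T ^ j) ((T ^ k) x) = (T ^ (j + k)) x := by
  rw [zpow_add]; rfl

lemma zpow_apply_T (k : ℤ) (x : L) : (T ^ k) (T x) = T ((T ^ k) x) := by
  have e1 : T x = (T ^ (1 : ℤ)) x := by simp
  have e2 : T ((T ^ k) x) = (T ^ (1 : ℤ)) ((T ^ k) x) := by simp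
  rw [e1, e2, zpow_apply_zpow, zpow_apply_zpow, add_comm]

lemma zpow_neg_one_apply_T (x : L) : (T ^ (-1 : ℤ)) (T x) = x := by
  have e1 : T x = (T ^ (1 : ℤ)) x := by simp
  rw [e1, zpow_apply_zpow]; simp

lemma T_apply_zpow_neg_one (x : L) : T ((T ^ (-1 : ℤ)) x) = x := by
  rw [← zpow_apply_T, zpow_neg_one_apply_T]

lemma zOrbit_equiv : Equivalence (zOrbitRel T) where
  refl x := ⟨0, by simp⟩
  symm := by rintro x y ⟨k, rfl⟩; exact ⟨-k, by rw [zpow_apply_zpow]; simp⟩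
  trans := by rintro x y z ⟨k, rfl⟩ ⟨l, rfl⟩; exact ⟨l + k, by rw [zpow_apply_zpow]⟩

lemma quot_mk_zpow (k : ℤ) (x : L) : Quot.mk (zOrbitRel T) ((T ^ k) x) = Quot.mk _ x :=
  Quot.sound ⟨-k, by rw [zpow_apply_zpow]; simp⟩

lemma quot_mk_eq_iff (x y : L) :
    Quot.mk (zOrbitRel T) x = Quot.mk (zOrbitRel T) y ↔ zOrbitRel T x y := by
  rw [Quot.eq, (zOrbit_equiv T).eqvGen_iff]

lemma le_npow_self (hinc : ∀ x : L, x < T x) : ∀ (m : ℕ) (x : L), x ≤ (T ^ m) x := by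
  intro m
  induction m with
  | zero => intro x; simp
  | succ i ih =>
      intro x
      have h : (T ^ (i + 1)) x = (T ^ i) (T x) := by rw [pow_succ]; rfl
      rw [h]; exact (hinc x).le.trans (ih (T x))

lemma le_zpow_self (hinc : ∀ x : L, x < T x) {k : ℤ} (hk : 0 ≤ k) (x : L) :
    x ≤ (T ^ k) x := by
  obtain ⟨m, rfl⟩ := Int.eq_ofNat_of_zero_le hk
  rw [zpow_natCast]; exact le_npow_self T hinc m x

lemma zpow_le_zpow_apply (hinc : ∀ x : L, x < T x) {j k : ℤ} (h : j ≤ k) (x : L) :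
    (T ^ j) x ≤ (T ^ k) x := by
  have h1 := le_zpow_self T hinc (sub_nonneg.2 h) ((T ^ j) x)
  have h2 : k - j + j = k := by ring
  rwa [zpow_apply_zpow, h2] at h1

/-- From a representative interval `a ≤ b ≤ T^m a` one gets a walk of length `≤ m`. -/
lemma exists_walk_of_le (hinc : ∀ x : L, x < T x) :
    ∀ (m : ℕ) (a b : L), a ≤ b → b ≤ (T ^ (m : ℤ)) a →
    ∃ p : (quotGraph T).Walk (Quot.mk _ a) (Quot.mk _ b), p.length ≤ m := by
  intro m
  induction m with
  | zero =>
      intro a b h1 h2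
      have hb : b = a := le_antisymm (by simpa using h2) h1
      subst hb; exact ⟨Walk.nil, by simp⟩
  | succ m ih =>
      intro a b h1 h2
      have hcb : b ⊓ T a ≤ b := inf_le_left
      have hbTc : b ≤ (T ^ (m : ℤ)) (b ⊓ T a) := by
        rw [(T ^ (m : ℤ)).map_inf]
        refine le_inf (le_zpow_self T hinc (by positivity) b) ?_
        have : (T ^ (m : ℤ)) (T a) = (T ^ ((m + 1 : ℕ) : ℤ)) a := by
          have h1' : T a = (T ^ (1 : ℤ)) a := by simp
          rw [h1', zpow_apply_zpow]
          norm_cast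
        rw [this]; exact h2
      obtain ⟨q, hq⟩ := ih (b ⊓ T a) b hcb hbTc
      by_cases h : Quot.mk (zOrbitRel T) a = Quot.mk (zOrbitRel T) (b ⊓ T a)
      · exact ⟨q.copy h.symm rfl, by simpa using Nat.le_succ_of_le hq⟩
      · refine ⟨Walk.cons ⟨h, a, b ⊓ T a, rfl, rfl, le_inf h1 (hinc a).le, inf_le_right⟩ q, ?_⟩
        exact Nat.succ_le_succ hq

/-- A walk of length `m` starting at `[a]` yields a representative in `[a, T^m a]`. -/
lemma exists_rep_of_walk :
    ∀ {X Y : Quot (zOrbitRel T)} (p : (quotGraph T).Walk X Y) (a : L),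
      Quot.mk _ a = X → ∃ b : L, Quot.mk _ b = Y ∧ a ≤ b ∧ b ≤ (T ^ (p.length : ℤ)) a := by
  intro X Y p
  induction p with
  | nil => intro a ha; exact ⟨a, ha, le_rfl, by simp⟩
  | @cons u v w h q ih =>
      intro a ha
      simp only [Walk.length_cons]
      obtain ⟨hne, x₀, y₀, hx, hy, l1, l2⟩ := h
      obtain ⟨k, hk⟩ : zOrbitRel T x₀ a := (quot_mk_eq_iff T _ _).mp (hx.trans ha.symm)
      have hrep : Quot.mk (zOrbitRel T) ((T ^ k) y₀) = v := by rw [quot_mk_zpow]; exact hy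
      have h1 : a ≤ (T ^ k) y₀ := hk ▸ (T ^ k).monotone l1
      have h2 : (T ^ k) y₀ ≤ T a := by
        have := (T ^ k).monotone l2
        rw [zpow_apply_T, hk] at this; exact this
      obtain ⟨b, hb, hb1, hb2⟩ := ih ((T ^ k) y₀) hrep
      refine ⟨b, hb, h1.trans hb1, ?_⟩
      have h3 : (T ^ (q.length : ℤ)) ((T ^ k) y₀) ≤ (T ^ (q.length : ℤ)) (T a) :=
        (T ^ (q.length : ℤ)).monotone h2
      have e : (T ^ (q.length : ℤ)) (T a) = (T ^ ((q.length + 1 : ℕ) : ℤ)) a := by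
        have h1' : T a = (T ^ (1 : ℤ)) a := by simp
        rw [h1', zpow_apply_zpow]
        norm_cast
      rw [e] at h3
      exact hb2.trans h3

/-- The canonical representative of a neighbour `y` of `t` at distance `n` from `x = [a]`. -/
lemma canonical_rep (hinc : ∀ x : L, x < T x) (n : ℕ) (hn : 2 ≤ n)
    (a t₀ : L) (t : Quot (zOrbitRel T)) (ht₀ : Quot.mk _ t₀ = t) (hat : a ≤ t₀)
    (ht₀T : t₀ ≤ (T ^ ((n + 1 : ℕ) : ℤ)) a)
    (htmin : ∀ j : ℤ, a ≤ (T ^ j) t₀ → (T ^ j) t₀ ≤ (T ^ (n : ℤ)) a → False)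
    (y : Quot (zOrbitRel T)) (y₁ : L) (hy₁ : Quot.mk _ y₁ = y)
    (hay : a ≤ y₁) (hyT : y₁ ≤ (T ^ (n : ℤ)) a)
    (hymin : ∀ j : ℤ, a ≤ (T ^ j) y₁ → (T ^ j) y₁ ≤ (T ^ ((n - 1 : ℕ) : ℤ)) a → False)
    (hadj : (quotGraph T).Adj y t) :
    y₁ ≤ t₀ ∧ t₀ ≤ T y₁ := by
  obtain ⟨hne, y₂, t₂, hy₂, ht₂, l1, l2⟩ := hadj
  obtain ⟨p, hp⟩ : zOrbitRel T t₂ t₀ := (quot_mk_eq_iff T _ _).mp (ht₂.trans ht₀.symm)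
  have hy't : (T ^ p) y₂ ≤ t₀ := hp ▸ (T ^ p).monotone l1
  have ht'y : t₀ ≤ T ((T ^ p) y₂) := by
    have := (T ^ p).monotone l2
    rwa [zpow_apply_T, hp] at this
  obtain ⟨s, hs⟩ : zOrbitRel T y₁ ((T ^ p) y₂) :=
    (quot_mk_eq_iff T _ _).mp (hy₁.trans ((quot_mk_zpow T p y₂).trans hy₂).symm)
  rcases lt_trichotomy s 0 with hs0 | hs0 | hs0
  · -- s ≤ -1 : then t₀ ≤ T^{s+1} y₁ ≤ y₁ ≤ T^n a, contradiction with htmin 0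
    exfalso
    have hT : T ((T ^ p) y₂) = (T ^ (1 + s)) y₁ := by
      rw [← hs, ← zpow_apply_zpow T 1 s y₁]; simp
    have h1 : t₀ ≤ y₁ := by
      refine ht'y.trans ?_
      rw [hT]
      have := zpow_le_zpow_apply T hinc (show (1 + s : ℤ) ≤ 0 by omega) y₁
      simpa using this
    exact htmin 0 (by simpa using hat) (by simpa using h1.trans hyT)
  · -- s = 0 : the good case
    subst hs0
    simp only [zpow_zero] at hs
    have hs' : y₁ = (T ^ p) y₂ := by simpa using hs
    rw [← hs'] at hy't ht'y
    exact ⟨hy't, ht'y⟩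
  · -- s ≥ 1 : then T a ≤ t₀ gives a rep of t in [a, T^n a], contradiction with htmin (-1)
    exfalso
    have h1 : T a ≤ (T ^ s) y₁ := by
      have e : T y₁ = (T ^ (1 : ℤ)) y₁ := by simp
      calc T a ≤ T y₁ := T.monotone hay
        _ = (T ^ (1 : ℤ)) y₁ := e
        _ ≤ (T ^ s) y₁ := zpow_le_zpow_apply T hinc (by omega) y₁
    have h2 : T a ≤ t₀ := h1.trans (hs ▸ hy't)
    refine htmin (-1) ?_ ?_
    · have := (T ^ (-1 : ℤ)).monotone h2
      rwa [zpow_neg_one_apply_T] at this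
    · have := (T ^ (-1 : ℤ)).monotone ht₀T
      rw [zpow_apply_zpow] at this
      refine this.trans (zpow_le_zpow_apply T hinc (by push_cast; omega) a)
end


/-- Lemma 2.4. The quotient graph `X = L/ℤ` satisfies the quadrangle
condition: for every `n ≥ 2` and vertices `x, y, z, t` with `d(x,y) = d(x,z) = n`,
`d(y,t) = d(z,t) = 1` and `d(x,t) = n + 1`, there is a vertex `u` with `d(x,u) = n - 1`
and `d(u,y) = d(u,z) = 1`. -/
theorem quotGraph_quadrangle_condition {L : Type*} [Lattice L] (T : L ≃o L)
    (hjoin : ∀ S : Set L, S.Nonempty → BddAbove S → ∃ j, IsLUB S j)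
    (hinc : ∀ x : L, x < T x)
    (hcof : ∀ x y : L, ∃ k : ℕ, (T ^ (k : ℤ))⁻¹ x ≤ y ∧ y ≤ (T ^ (k : ℤ)) x)
    (n : ℕ) (hn : 2 ≤ n) (x y z t : Quot (zOrbitRel T))
    (hxy : (quotGraph T).dist x y = n) (hxz : (quotGraph T).dist x z = n)
    (hyt : (quotGraph T).dist y t = 1) (hzt : (quotGraph T).dist z t = 1)
    (hxt : (quotGraph T).dist x t = n + 1) :
    ∃ u : Quot (zOrbitRel T), (quotGraph T).dist x u = n - 1 ∧
      (quotGraph T).dist u y = 1 ∧ (quotGraph T).dist u z = 1 := by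
  classical
  obtain ⟨a, ha⟩ := Quot.exists_rep x
  -- generic distance upper bound from representatives
  have dist_le_rep : ∀ (m : ℕ) (c b : L), c ≤ b → b ≤ (T ^ (m : ℤ)) c →
      (quotGraph T).dist (Quot.mk _ c) (Quot.mk _ b) ≤ m := by
    intro m c b h1 h2
    obtain ⟨p, hp⟩ := exists_walk_of_le T hinc m c b h1 h2
    exact (SimpleGraph.dist_le p).trans hp
  have reach_rep : ∀ (m : ℕ) (c b : L), c ≤ b → b ≤ (T ^ (m : ℤ)) c →
      (quotGraph T).Reachable (Quot.mk _ c) (Quot.mk _ b) := by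
    intro m c b h1 h2
    obtain ⟨p, -⟩ := exists_walk_of_le T hinc m c b h1 h2
    exact ⟨p⟩
  -- extract representatives from distances
  have extract : ∀ (Y : Quot (zOrbitRel T)) (m : ℕ), 0 < m → (quotGraph T).dist x Y = m →
      ∃ b : L, Quot.mk _ b = Y ∧ a ≤ b ∧ b ≤ (T ^ (m : ℤ)) a := by
    intro Y m hm hd
    have hr : (quotGraph T).Reachable x Y := by
      by_contra hnr
      have : (quotGraph T).dist x Y = 0 :=
        SimpleGraph.dist_eq_zero_iff_eq_or_not_reachable.mpr (Or.inr hnr)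
      omega
    obtain ⟨p, hp⟩ := hr.exists_walk_length_eq_dist
    obtain ⟨b, hb, h1, h2⟩ := exists_rep_of_walk T p a ha
    rw [hp, hd] at h2
    exact ⟨b, hb, h1, h2⟩
  -- representative of t
  obtain ⟨t₀, ht₀, hat, ht₀T⟩ := extract t (n + 1) (by omega) hxt
  have htmin : ∀ j : ℤ, a ≤ (T ^ j) t₀ → (T ^ j) t₀ ≤ (T ^ (n : ℤ)) a → False := by
    intro j h1 h2
    have := dist_le_rep n a ((T ^ j) t₀) h1 h2
    rw [ha, (quot_mk_zpow T j t₀).trans ht₀] at this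
    omega
  -- representative of y
  obtain ⟨y₀, hy₀, hay, hyT⟩ := extract y n (by omega) hxy
  have hymin : ∀ j : ℤ, a ≤ (T ^ j) y₀ → (T ^ j) y₀ ≤ (T ^ ((n - 1 : ℕ) : ℤ)) a → False := by
    intro j h1 h2
    have := dist_le_rep (n - 1) a ((T ^ j) y₀) h1 h2
    rw [ha, (quot_mk_zpow T j y₀).trans hy₀] at this
    omega
  -- representative of z
  obtain ⟨z₀, hz₀, haz, hzT⟩ := extract z n (by omega) hxz
  have hzmin : ∀ j : ℤ, a ≤ (T ^ j) z₀ → (T ^ j) z₀ ≤ (T ^ ((n - 1 : ℕ) : ℤ)) a → False := by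
    intro j h1 h2
    have := dist_le_rep (n - 1) a ((T ^ j) z₀) h1 h2
    rw [ha, (quot_mk_zpow T j z₀).trans hz₀] at this
    omega
  -- canonical positions with respect to t₀
  obtain ⟨hyt₀, ht₀y⟩ := canonical_rep T hinc n hn a t₀ t ht₀ hat ht₀T htmin y y₀ hy₀ hay hyT
    hymin (SimpleGraph.dist_eq_one_iff_adj.mp hyt)
  obtain ⟨hzt₀, ht₀z⟩ := canonical_rep T hinc n hn a t₀ t ht₀ hat ht₀T htmin z z₀ hz₀ haz hzT
    hzmin (SimpleGraph.dist_eq_one_iff_adj.mp hzt)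
  -- the candidate u
  set w : L := y₀ ⊔ z₀ with hw
  set u₀ : L := a ⊔ (T ^ (-1 : ℤ)) w with hu₀
  set u : Quot (zOrbitRel T) := Quot.mk _ u₀ with hu
  have hau : a ≤ u₀ := le_sup_left
  have hwT : w ≤ (T ^ (n : ℤ)) a := sup_le hyT hzT
  have hwTy : w ≤ T y₀ := sup_le (hinc y₀).le (hzt₀.trans ht₀y)
  have hwTz : w ≤ T z₀ := sup_le (hyt₀.trans ht₀z) (hinc z₀).le
  have huy : u₀ ≤ y₀ := by
    refine sup_le hay ?_
    have := (T ^ (-1 : ℤ)).monotone hwTy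
    rwa [zpow_neg_one_apply_T] at this
  have huz : u₀ ≤ z₀ := by
    refine sup_le haz ?_
    have := (T ^ (-1 : ℤ)).monotone hwTz
    rwa [zpow_neg_one_apply_T] at this
  have hyTu : y₀ ≤ T u₀ := by
    have h1 : w ≤ T u₀ := by
      have : (T ^ (-1 : ℤ)) w ≤ u₀ := le_sup_right
      have h2 := T.monotone this
      rwa [T_apply_zpow_neg_one] at h2
    exact le_sup_left.trans h1
  have hzTu : z₀ ≤ T u₀ := by
    have h1 : w ≤ T u₀ := by
      have : (T ^ (-1 : ℤ)) w ≤ u₀ := le_sup_right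
      have h2 := T.monotone this
      rwa [T_apply_zpow_neg_one] at h2
    exact le_sup_right.trans h1
  have huT : u₀ ≤ (T ^ ((n - 1 : ℕ) : ℤ)) a := by
    refine sup_le (le_zpow_self T hinc (by positivity) a) ?_
    have := (T ^ (-1 : ℤ)).monotone hwT
    rw [zpow_apply_zpow] at this
    exact this.trans (zpow_le_zpow_apply T hinc (by push_cast; omega) a)
  -- distance bounds
  have hxu_le : (quotGraph T).dist x u ≤ n - 1 := by
    have := dist_le_rep (n - 1) a u₀ hau huT
    rwa [ha] at this
  have huy_le : (quotGraph T).dist u y ≤ 1 := by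
    have := dist_le_rep 1 u₀ y₀ huy (by simpa using hyTu)
    rwa [hy₀] at this
  have huz_le : (quotGraph T).dist u z ≤ 1 := by
    have := dist_le_rep 1 u₀ z₀ huz (by simpa using hzTu)
    rwa [hz₀] at this
  have hru_y : (quotGraph T).Reachable u y := by
    have := reach_rep 1 u₀ y₀ huy (by simpa using hyTu)
    rwa [hy₀] at this
  have hru_z : (quotGraph T).Reachable u z := by
    have := reach_rep 1 u₀ z₀ huz (by simpa using hzTu)
    rwa [hz₀] at this
  have hrxu : (quotGraph T).Reachable x u := by
    have := reach_rep (n - 1) a u₀ hau huT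
    rwa [ha] at this
  have hune_y : u ≠ y := by
    intro e
    rw [← e] at hxy
    omega
  have hune_z : u ≠ z := by
    intro e
    rw [← e] at hxz
    omega
  have huy_eq : (quotGraph T).dist u y = 1 := by
    have h0 : (quotGraph T).dist u y ≠ 0 := by
      intro h0
      rcases SimpleGraph.dist_eq_zero_iff_eq_or_not_reachable.mp h0 with h | h
      · exact hune_y h
      · exact h hru_y
    omega
  have huz_eq : (quotGraph T).dist u z = 1 := by
    have h0 : (quotGraph T).dist u z ≠ 0 := by
      intro h0
      rcases SimpleGraph.dist_eq_zero_iff_eq_or_not_reachable.mp h0 with h | h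
      · exact hune_z h
      · exact h hru_z
    omega
  -- lower bound on dist x u
  have hxu_eq : (quotGraph T).dist x u = n - 1 := by
    by_contra hne'
    have hm : (quotGraph T).dist x u ≤ n - 2 := by omega
    have hpos : 0 < (quotGraph T).dist x u := by
      rcases Nat.eq_zero_or_pos ((quotGraph T).dist x u) with h | h
      · exfalso
        rcases SimpleGraph.dist_eq_zero_iff_eq_or_not_reachable.mp h with h' | h'
        · rw [← h'] at huy_eq
          omega
        · exact h' hrxu
      · exact h
    obtain ⟨u₁, hu₁, hau₁, hu₁T⟩ := extract u ((quotGraph T).dist x u) hpos rfl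
    -- relate u₁ and u₀
    obtain ⟨r, hr⟩ : zOrbitRel T u₀ u₁ := (zOrbit_equiv T).symm ((quot_mk_eq_iff T _ _).mp
      (hu₁.trans hu.symm))
    refine hymin r ?_ ?_
    · have h1 : u₁ ≤ (T ^ r) y₀ := by
        rw [← hr]; exact (T ^ r).monotone huy
      exact hau₁.trans h1
    · have h1 : (T ^ r) y₀ ≤ T u₁ := by
        have := (T ^ r).monotone hyTu
        rwa [zpow_apply_T, hr] at this
      have h2 : T u₁ ≤ T ((T ^ (((quotGraph T).dist x u : ℕ) : ℤ)) a) := T.monotone hu₁T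
      have h3 : T ((T ^ (((quotGraph T).dist x u : ℕ) : ℤ)) a) ≤ (T ^ ((n - 1 : ℕ) : ℤ)) a := by
        have e : T ((T ^ (((quotGraph T).dist x u : ℕ) : ℤ)) a)
            = (T ^ (1 + ((quotGraph T).dist x u : ℤ))) a := by
          rw [← zpow_apply_zpow]; simp
        rw [e]
        refine zpow_le_zpow_apply T hinc ?_ a
        push_cast
        omega
      exact h1.trans (h2.trans h3)
  exact ⟨u, hxu_eq, huy_eq, huz_eq⟩
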